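/- Let F_Z(τ) be the product of the six genus-two theta constants with characteristics (0,0,0,0), (0,0,0,1), (0,0,1,0), (0,0,1,1), (0,1,1,0), (0,1,0,0). Then for every τ in the complex upper half plane, lim_{t → ∞} F_Z(diag(i t, τ)) = θ_{(0,0)}(τ)² · θ_{(0,1)}(τ)² · θ_{(1,0)}(τ)², where diag(i t, τ) denotes the diagonal 2 × 2 period matrix with entries i t and τ and t ranges over positive reals. -/

import Mathlib

open Complex

/-- The genus-one theta constant
`θ_{(a,b)}(τ) = ∑_{n ∈ ℤ} exp(πiτ(n + a/2)² + πi(n + a/2)b)`. -/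
noncomputable def theta1 (a b : ℤ) (τ : ℂ) : ℂ :=
  ∑' n : ℤ, Complex.exp (Real.pi * I * τ * ((n : ℂ) + (a : ℂ) / 2) ^ 2 +
    Real.pi * I * ((n : ℂ) + (a : ℂ) / 2) * (b : ℂ))

/-- The genus-two theta constant with characteristic `m = (a, b, c, d)` evaluated at the
diagonal period matrix `diag(τ₁, τ₂)`. -/
noncomputable def theta2diag (a b c d : ℤ) (τ₁ τ₂ : ℂ) : ℂ :=
  ∑' n : ℤ × ℤ, Complex.exp
    (Real.pi * I * (τ₁ * ((n.1 : ℂ) + (a : ℂ) / 2) ^ 2 +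
        τ₂ * ((n.2 : ℂ) + (b : ℂ) / 2) ^ 2) +
      Real.pi * I * (((n.1 : ℂ) + (a : ℂ) / 2) * (c : ℂ) +
        ((n.2 : ℂ) + (b : ℂ) / 2) * (d : ℂ)))

/-- The six-fold theta product `F_Z` evaluated at the diagonal period matrix `diag(τ₁, τ₂)`:
the product of the genus-two theta constants with characteristics
`(0,0,0,0), (0,0,0,1), (0,0,1,0), (0,0,1,1), (0,1,1,0), (0,1,0,0)`. -/
noncomputable def FZdiag (τ₁ τ₂ : ℂ) : ℂ :=
  theta2diag 0 0 0 0 τ₁ τ₂ * theta2diag 0 0 0 1 τ₁ τ₂ * theta2diag 0 0 1 0 τ₁ τ₂ *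
    theta2diag 0 0 1 1 τ₁ τ₂ * theta2diag 0 1 1 0 τ₁ τ₂ * theta2diag 0 1 0 0 τ₁ τ₂

/-- The general term of `theta1`. -/
noncomputable def th1term (a b : ℤ) (τ : ℂ) (n : ℤ) : ℂ :=
  Complex.exp (Real.pi * I * τ * ((n : ℂ) + (a : ℂ) / 2) ^ 2 +
    Real.pi * I * ((n : ℂ) + (a : ℂ) / 2) * (b : ℂ))

lemma th1term_eq (a b : ℤ) (τ : ℂ) (n : ℤ) :
    th1term a b τ n = Complex.exp (Real.pi * I * τ * ((a : ℂ) / 2) ^ 2 +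
      Real.pi * I * ((a : ℂ) / 2) * (b : ℂ)) *
      jacobiTheta₂_term n (((a : ℂ) * τ + (b : ℂ)) / 2) τ := by
  rw [th1term, jacobiTheta₂_term, ← Complex.exp_add]
  congr 1
  ring

lemma summable_th1term {τ : ℂ} (hτ : 0 < τ.im) (a b : ℤ) :
    Summable (th1term a b τ) := by
  have := ((summable_jacobiTheta₂_term_iff (((a : ℂ) * τ + (b : ℂ)) / 2) τ).mpr hτ).mul_left
    (Complex.exp (Real.pi * I * τ * ((a : ℂ) / 2) ^ 2 +
      Real.pi * I * ((a : ℂ) / 2) * (b : ℂ)))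
  exact this.congr fun n => (th1term_eq a b τ n).symm

lemma theta1_eq (a b : ℤ) (τ : ℂ) : theta1 a b τ = ∑' n : ℤ, th1term a b τ n := rfl

/-- Factorization of the genus-two theta constant on the diagonal. -/
lemma theta2diag_eq {τ₁ τ₂ : ℂ} (h₁ : 0 < τ₁.im) (h₂ : 0 < τ₂.im) (a b c d : ℤ) :
    theta2diag a b c d τ₁ τ₂ = theta1 a c τ₁ * theta1 b d τ₂ := by
  have hs₁ := summable_th1term h₁ a c
  have hs₂ := summable_th1term h₂ b d
  have hprod : Summable fun n : ℤ × ℤ => th1term a c τ₁ n.1 * th1term b d τ₂ n.2 :=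
    ((summable_norm_iff.mpr hs₁).mul_norm (summable_norm_iff.mpr hs₂)).of_norm
  have hmul := hs₁.hasSum.mul hs₂.hasSum hprod
  have : theta2diag a b c d τ₁ τ₂ =
      ∑' n : ℤ × ℤ, th1term a c τ₁ n.1 * th1term b d τ₂ n.2 := by
    rw [theta2diag]
    refine tsum_congr fun n => ?_
    rw [th1term, th1term, ← Complex.exp_add]
    congr 1
    ring
  rw [this, hmul.tsum_eq, theta1_eq, theta1_eq]

lemma norm_th1term_zero (c : ℤ) (t : ℝ) (n : ℤ) :
    ‖th1term 0 c (I * (t : ℂ)) n‖ = Real.exp (-(Real.pi * t * (n : ℝ) ^ 2)) := by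
  have : th1term 0 c (I * (t : ℂ)) n =
      Complex.exp (((-(Real.pi * t * (n : ℝ) ^ 2) : ℝ) : ℂ) +
        ((Real.pi * (n : ℝ) * (c : ℝ) : ℝ) : ℂ) * I) := by
    rw [th1term]
    congr 1
    push_cast
    ring_nf
    rw [Complex.I_sq]
    ring
  rw [this, Complex.norm_exp, Complex.add_re, Complex.ofReal_re,
    Complex.re_ofReal_mul, Complex.I_re, mul_zero, add_zero]

lemma th1term_zero_zero (c : ℤ) (t : ℝ) : th1term 0 c (I * (t : ℂ)) 0 = 1 := by
  rw [th1term]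
  norm_num

/-- The key limit: `θ_{(0,c)}(it) → 1` as `t → ∞`. -/
lemma theta1_tendsto (c : ℤ) :
    Filter.Tendsto (fun t : ℝ => theta1 0 c (I * (t : ℂ))) Filter.atTop (nhds 1) := by
  set C : ℝ := ∑' n : ℤ, (if n = 0 then 0 else Real.exp (-(Real.pi * (n : ℝ) ^ 2))) with hC
  have hCs : Summable fun n : ℤ => (if n = 0 then (0:ℝ) else Real.exp (-(Real.pi * (n : ℝ) ^ 2))) := by
    have h1 : Summable fun n : ℤ => ‖th1term 0 c (I * ((1:ℝ) : ℂ)) n‖ := by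
      refine summable_norm_iff.mpr (summable_th1term ?_ 0 c)
      simp
    refine Summable.of_nonneg_of_le (fun n => by positivity) (fun n => ?_) h1
    rw [norm_th1term_zero]
    split
    · positivity
    · simp
  rw [show (1 : ℂ) = 1 by rfl, tendsto_iff_norm_sub_tendsto_zero]
  have hev : ∀ᶠ t : ℝ in Filter.atTop,
      ‖theta1 0 c (I * (t : ℂ)) - 1‖ ≤ Real.exp (-(t - 1)) * C := by
    filter_upwards [Filter.eventually_ge_atTop (1:ℝ)] with t ht
    have him : 0 < (I * (t : ℂ)).im := by simp; linarith
    have hsum := summable_th1term him 0 c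
    have hsplit := hsum.tsum_eq_add_tsum_ite 0
    have hθ : theta1 0 c (I * (t : ℂ)) - 1 =
        ∑' n : ℤ, (if n = 0 then 0 else th1term 0 c (I * (t : ℂ)) n) := by
      rw [theta1_eq, hsplit, th1term_zero_zero]
      ring
    rw [hθ]
    have hnorms : Summable fun n : ℤ =>
        ‖(if n = 0 then 0 else th1term 0 c (I * (t : ℂ)) n)‖ := by
      refine Summable.of_nonneg_of_le (fun n => norm_nonneg _) (fun n => ?_)
        (summable_norm_iff.mpr hsum)
      split <;> simp
    refine (norm_tsum_le_tsum_norm hnorms).trans ?_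
    have hg : Summable fun n : ℤ =>
        Real.exp (-(t - 1)) * (if n = 0 then (0:ℝ) else Real.exp (-(Real.pi * (n : ℝ) ^ 2))) :=
      hCs.mul_left _
    have hle : ∀ n : ℤ, ‖(if n = 0 then 0 else th1term 0 c (I * (t : ℂ)) n)‖ ≤
        Real.exp (-(t - 1)) * (if n = 0 then (0:ℝ) else Real.exp (-(Real.pi * (n : ℝ) ^ 2))) := by
      intro n
      by_cases hn : n = 0
      · simp [hn]
      · simp only [hn, if_neg, if_false]
        rw [norm_th1term_zero, ← Real.exp_add, Real.exp_le_exp]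
        have hn2 : 1 ≤ (n : ℝ) ^ 2 := by
          have : 1 ≤ |(n:ℝ)| := by
            rw [← Int.cast_abs]
            exact_mod_cast Int.one_le_abs hn
          nlinarith [abs_nonneg (n:ℝ), _root_.sq_abs (n:ℝ)]
        have hkey : (0:ℝ) ≤ (t - 1) * (Real.pi * (n:ℝ)^2 - 1) := by
          have h1 : (0:ℝ) ≤ t - 1 := by linarith
          have h2 : (0:ℝ) ≤ Real.pi * (n:ℝ)^2 - 1 := by nlinarith [Real.pi_gt_three]
          exact mul_nonneg h1 h2
        nlinarith [hkey]
    refine (hnorms.tsum_le_tsum hle hg).trans ?_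
    rw [tsum_mul_left]
  refine squeeze_zero' (by filter_upwards with t using norm_nonneg _) hev ?_
  have h1 : Filter.Tendsto (fun t : ℝ => Real.exp (-(t - 1))) Filter.atTop (nhds 0) :=
    Real.tendsto_exp_atBot.comp
      (Filter.tendsto_neg_atTop_atBot.comp (Filter.tendsto_atTop_add_const_right _ (-1)
        Filter.tendsto_id))
  simpa using h1.mul_const C

/-- For every `τ` in the upper half plane,
`lim_{t → ∞} F_Z(diag(it, τ)) = θ_{(0,0)}(τ)² θ_{(0,1)}(τ)² θ_{(1,0)}(τ)²`. -/
theorem FZdiag_tendsto (τ : ℂ) (hτ : 0 < τ.im) :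
    Filter.Tendsto (fun t : ℝ => FZdiag (I * (t : ℂ)) τ) Filter.atTop
      (nhds (theta1 0 0 τ ^ 2 * theta1 0 1 τ ^ 2 * theta1 1 0 τ ^ 2)) := by
  have h0 := theta1_tendsto 0
  have h1 := theta1_tendsto 1
  have T : Filter.Tendsto (fun t : ℝ =>
      (theta1 0 0 (I * (t:ℂ)) * theta1 0 0 τ) * (theta1 0 0 (I * (t:ℂ)) * theta1 0 1 τ) *
      (theta1 0 1 (I * (t:ℂ)) * theta1 0 0 τ) * (theta1 0 1 (I * (t:ℂ)) * theta1 0 1 τ) *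
      (theta1 0 1 (I * (t:ℂ)) * theta1 1 0 τ) * (theta1 0 0 (I * (t:ℂ)) * theta1 1 0 τ))
      Filter.atTop (nhds ((1 * theta1 0 0 τ) * (1 * theta1 0 1 τ) * (1 * theta1 0 0 τ) *
        (1 * theta1 0 1 τ) * (1 * theta1 1 0 τ) * (1 * theta1 1 0 τ))) :=
    (((((h0.mul_const _).mul (h0.mul_const _)).mul (h1.mul_const _)).mul
      (h1.mul_const _)).mul (h1.mul_const _)).mul (h0.mul_const _)
  have heq : (1 * theta1 0 0 τ) * (1 * theta1 0 1 τ) * (1 * theta1 0 0 τ) *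
      (1 * theta1 0 1 τ) * (1 * theta1 1 0 τ) * (1 * theta1 1 0 τ) =
      theta1 0 0 τ ^ 2 * theta1 0 1 τ ^ 2 * theta1 1 0 τ ^ 2 := by ring
  rw [heq] at T
  refine T.congr' ?_
  filter_upwards [Filter.eventually_gt_atTop (0:ℝ)] with t ht
  have him : 0 < (I * (t : ℂ)).im := by simpa using ht
  rw [FZdiag, theta2diag_eq him hτ, theta2diag_eq him hτ, theta2diag_eq him hτ,
    theta2diag_eq him hτ, theta2diag_eq him hτ, theta2diag_eq him hτ]
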